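/- The poset of 312-avoiding real TITOs, ordered by the Dyer order, is a lattice: for any two 312-avoiding real TITOs x and y, there exists a 312-avoiding real TITO that is a greatest lower bound of {x, y} within this poset, and there exists a 312-avoiding real TITO that is a least upper bound of {x, y} within this poset. -/

import Mathlib

structure TITO (n : ℕ) where
  rel : ℤ → ℤ → Prop
  refl : ∀ a, rel a a
  antisymm : ∀ a b, rel a b → rel b a → a = b
  trans : ∀ a b c, rel a b → rel b c → rel a c
  total : ∀ a b, rel a b ∨ rel b a
  invariant : ∀ a b, rel a b ↔ rel (a + n) (b + n)

namespace TITO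

variable {n : ℕ}

/-- The inversion set of a TITO. -/
def Inversions (t : TITO n) : Set (ℤ × ℤ) := {p | p.1 < p.2 ∧ t.rel p.2 p.1}

/-- A TITO is 312-avoiding if there are no integers `a < b < c` with `c ≼ a` and `a ≼ b`. -/
def Avoids312 (t : TITO n) : Prop :=
  ¬ ∃ a b c : ℤ, a < b ∧ b < c ∧ t.rel c a ∧ t.rel a b

/-- A TITO is 132-avoiding if there are no integers `a < b < c` with `a ≼ c` and `c ≼ b`. -/
def Avoids132 (t : TITO n) : Prop :=
  ¬ ∃ a b c : ℤ, a < b ∧ b < c ∧ t.rel a c ∧ t.rel c b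

/-- A set is order-convex for a TITO. -/
def OrderConvex (t : TITO n) (S : Set ℤ) : Prop :=
  ∀ x ∈ S, ∀ z ∈ S, ∀ y : ℤ, t.rel x y → t.rel y z → y ∈ S

/-- A block of a TITO: an order-convex set with no minimal and no maximal element in which
all intervals are finite. -/
def IsBlock (t : TITO n) (I : Set ℤ) : Prop :=
  t.OrderConvex I ∧
  (∀ a ∈ I, ∃ b ∈ I, b ≠ a ∧ t.rel b a) ∧
  (∀ a ∈ I, ∃ b ∈ I, b ≠ a ∧ t.rel a b) ∧
  (∀ a ∈ I, ∀ c ∈ I, t.rel a c → {b : ℤ | t.rel a b ∧ t.rel b c}.Finite)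

/-- A block is waxing if `a ≼ a + n` for every `a` in it. -/
def Waxing (t : TITO n) (I : Set ℤ) : Prop := ∀ a ∈ I, t.rel a (a + n)

/-- A block is waning if `a + n ≼ a` for every `a` in it. -/
def Waning (t : TITO n) (I : Set ℤ) : Prop := ∀ a ∈ I, t.rel (a + n) a

/-- A TITO is real if `a ≼ a + n` whenever the residue class of `a` mod `n` is order-convex. -/
def IsReal (t : TITO n) : Prop :=
  ∀ a : ℤ, t.OrderConvex {x : ℤ | ∃ k : ℤ, x = a + k * n} → t.rel a (a + n)

/-- A TITO is co-real if `a + n ≼ a` whenever the residue class of `a` mod `n` is order-convex. -/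
def IsCoReal (t : TITO n) : Prop :=
  ∀ a : ℤ, t.OrderConvex {x : ℤ | ∃ k : ℤ, x = a + k * n} → t.rel (a + n) a

/-- `(a, b)` with `a < b` is a lower wall if `b ≼ a` is a cover relation of the total order. -/
def LowerWall (t : TITO n) (a b : ℤ) : Prop :=
  a < b ∧ t.rel b a ∧ ∀ z : ℤ, z ≠ a → z ≠ b → ¬ (t.rel b z ∧ t.rel z a)

end TITO

namespace AffT
open Classical
variable {n : ℕ}

/- ## WithTop ℤ helpers -/

lemma wt_le_of_forall {v w : WithTop ℤ} (h : ∀ c : ℤ, (c:WithTop ℤ) ≤ v → (c:WithTop ℤ) ≤ w) :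
    v ≤ w := by
  cases v with
  | top =>
    have : w = ⊤ := by
      cases w with
      | top => rfl
      | coe m => exact absurd (WithTop.coe_le_coe.mp (h (m+1) le_top)) (by omega)
    simp [this]
  | coe m => exact h m le_rfl

lemma wt_eq_of_forall {v w : WithTop ℤ} (h : ∀ c : ℤ, (c:WithTop ℤ) ≤ v ↔ (c:WithTop ℤ) ≤ w) :
    v = w :=
  le_antisymm (wt_le_of_forall fun c hc => (h c).mp hc)
    (wt_le_of_forall fun c hc => (h c).mpr hc)

lemma wt_coe_le_add {b c : ℤ} {v : WithTop ℤ} :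
    (b:WithTop ℤ) ≤ v + (c:ℤ) ↔ ((b - c : ℤ) : WithTop ℤ) ≤ v := by
  cases v with
  | top => simp
  | coe m =>
    have : ((m : WithTop ℤ) + (c:ℤ)) = ((m+c : ℤ) : WithTop ℤ) := by rw [← WithTop.coe_add]
    rw [this, WithTop.coe_le_coe, WithTop.coe_le_coe]
    omega

/- ## Good functions -/

def Good (n : ℕ) (f : ℤ → WithTop ℤ) : Prop :=
  (∀ a : ℤ, (a : WithTop ℤ) ≤ f a) ∧
  (∀ a : ℤ, f (a + (n:ℤ)) = f a + ((n:ℤ) : WithTop ℤ)) ∧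
  (∀ a b : ℤ, a < b → (b : WithTop ℤ) ≤ f a → f b ≤ f a)

def Rl (n : ℕ) (f : ℤ → WithTop ℤ) : Prop :=
  ∀ a : ℤ, f a = ⊤ → ∃ y, a < y ∧ y < a + (n:ℤ) ∧ f y = ⊤

def InvSet (f : ℤ → WithTop ℤ) : Set (ℤ × ℤ) :=
  {p | p.1 < p.2 ∧ (p.2 : WithTop ℤ) ≤ f p.1}

lemma invSet_mono {f g : ℤ → WithTop ℤ} (h : ∀ a, f a ≤ g a) : InvSet f ⊆ InvSet g :=
  fun p hp => ⟨hp.1, hp.2.trans (h p.1)⟩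

lemma le_of_invSet_subset {f g : ℤ → WithTop ℤ} (hg : Good n g)
    (h : InvSet f ⊆ InvSet g) : ∀ a, f a ≤ g a := by
  intro a
  apply wt_le_of_forall
  intro c hc
  rcases le_or_gt c a with h1 | h1
  · exact le_trans (WithTop.coe_le_coe.mpr h1) (hg.1 a)
  · exact (h (show (a,c) ∈ InvSet f from ⟨h1, hc⟩)).2

lemma good_top_shift {f : ℤ → WithTop ℤ} (hf : Good n f) (a : ℤ) :
    f (a + (n:ℤ)) = ⊤ ↔ f a = ⊤ := by
  rw [hf.2.1 a]
  cases h : f a with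
  | top => simp
  | coe m =>
    constructor
    · intro hh
      exfalso
      have : ((m : WithTop ℤ) + (n:ℤ)) = ((m+(n:ℤ) : ℤ) : WithTop ℤ) := by rw [← WithTop.coe_add]
      rw [this] at hh
      exact WithTop.coe_ne_top hh
    · intro hh; exact absurd hh WithTop.coe_ne_top

lemma good_top_shift_k {f : ℤ → WithTop ℤ} (hf : Good n f) (a : ℤ) (k : ℤ) :
    f (a + k * (n:ℤ)) = ⊤ ↔ f a = ⊤ := by
  induction k using Int.induction_on with
  | zero => simp
  | succ i ih =>
    have e : a + ((i:ℤ)+1) * (n:ℤ) = (a + (i:ℤ)*(n:ℤ)) + (n:ℤ) := by ring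
    rw [e, good_top_shift hf, ih]
  | pred i ih =>
    have e : a + (-(i:ℤ))*(n:ℤ) = (a + (-(i:ℤ)-1) * (n:ℤ)) + (n:ℤ) := by ring
    rw [e, good_top_shift hf] at ih
    exact ih

lemma good_lt_of_ne_top {f : ℤ → WithTop ℤ} (hf : Good n f) (hn : 0 < n) {a : ℤ}
    (h : f a ≠ ⊤) : f a < ((a + (n:ℤ) : ℤ) : WithTop ℤ) := by
  by_contra hc
  push_neg at hc
  have h3 := hf.2.2 a (a + (n:ℤ)) (by omega) hc
  rw [hf.2.1 a] at h3
  cases hm : f a with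
  | top => exact h hm
  | coe m =>
    rw [hm] at h3
    have : ((m : WithTop ℤ) + (n:ℤ)) = ((m+(n:ℤ) : ℤ) : WithTop ℤ) := by rw [← WithTop.coe_add]
    rw [this, WithTop.coe_le_coe] at h3
    omega

lemma good_top_of_ge {f : ℤ → WithTop ℤ} (hf : Good n f) (hn : 0 < n) {a : ℤ}
    (h : ((a + (n:ℤ) : ℤ) : WithTop ℤ) ≤ f a) : f a = ⊤ := by
  by_contra hc
  exact absurd h (not_le.mpr (good_lt_of_ne_top hf hn hc))

lemma good_le_of_lt_add {f : ℤ → WithTop ℤ} (hf : Good n f) (hn : 0 < n) {a : ℤ}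
    (h : f a ≠ ⊤) : f a ≤ ((a + (n:ℤ) - 1 : ℤ) : WithTop ℤ) := by
  have := good_lt_of_ne_top hf hn h
  cases hm : f a with
  | top => exact absurd hm h
  | coe m =>
    rw [hm] at this
    rw [WithTop.coe_le_coe]
    have := WithTop.coe_lt_coe.mp this
    omega

/- ## From Good functions to TITOs -/

noncomputable def ofFn (n : ℕ) (f : ℤ → WithTop ℤ) (hf : Good n f) : TITO n where
  rel a b := a = b ∨ (a < b ∧ f a < (b:WithTop ℤ)) ∨ (b < a ∧ (a:WithTop ℤ) ≤ f b)
  refl a := Or.inl rfl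
  antisymm a b hab hba := by
    rcases hab with h | ⟨h1, h2⟩ | ⟨h1, h2⟩ <;>
      rcases hba with h' | ⟨h1', h2'⟩ | ⟨h1', h2'⟩ <;>
      first
        | omega
        | (exact h)
        | (exact h'.symm)
        | (exact absurd h2' (not_le.mpr h2))
        | (exact absurd h2 (not_le.mpr h2'))
  trans a b c hab hbc := by
    rcases hab with rfl | ⟨h1, h2⟩ | ⟨h1, h2⟩
    · exact hbc
    · rcases hbc with rfl | ⟨h1', h2'⟩ | ⟨h1', h2'⟩
      · exact Or.inr (Or.inl ⟨h1, h2⟩)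
      · exact Or.inr (Or.inl ⟨h1.trans h1', h2.trans (WithTop.coe_lt_coe.mpr h1')⟩)
      · rcases lt_trichotomy a c with hac | rfl | hac
        · refine Or.inr (Or.inl ⟨hac, ?_⟩)
          by_contra hcon
          push_neg at hcon
          have := hf.2.2 a c hac hcon
          exact absurd (h2'.trans this) (not_le.mpr h2)
        · exact Or.inl rfl
        · exact Or.inr (Or.inr ⟨hac, le_trans (le_of_lt (WithTop.coe_lt_coe.mpr h1)) h2'⟩)
    · rcases hbc with rfl | ⟨h1', h2'⟩ | ⟨h1', h2'⟩
      · exact Or.inr (Or.inr ⟨h1, h2⟩)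
      · rcases lt_trichotomy a c with hac | rfl | hac
        · refine Or.inr (Or.inl ⟨hac, ?_⟩)
          have := hf.2.2 b a h1 h2
          exact lt_of_le_of_lt this h2'
        · exact Or.inl rfl
        · exfalso
          have : (a : WithTop ℤ) < (c : WithTop ℤ) := lt_of_le_of_lt h2 h2'
          exact absurd (WithTop.coe_lt_coe.mp this) (by omega)
      · refine Or.inr (Or.inr ⟨h1'.trans h1, ?_⟩)
        have := hf.2.2 c b h1' h2'
        exact le_trans h2 this
  total a b := by
    rcases lt_trichotomy a b with h | rfl | h
    · rcases lt_or_ge (f a) (b:WithTop ℤ) with h2 | h2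
      · exact Or.inl (Or.inr (Or.inl ⟨h, h2⟩))
      · exact Or.inr (Or.inr (Or.inr ⟨h, h2⟩))
    · exact Or.inl (Or.inl rfl)
    · rcases lt_or_ge (f b) (a:WithTop ℤ) with h2 | h2
      · exact Or.inr (Or.inr (Or.inl ⟨h, h2⟩))
      · exact Or.inl (Or.inr (Or.inr ⟨h, h2⟩))
  invariant a b := by
    have key : ∀ u v : ℤ, f u < (v:WithTop ℤ) ↔ f (u + (n:ℤ)) < ((v + (n:ℤ) : ℤ):WithTop ℤ) := by
      intro u v
      rw [hf.2.1 u]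
      cases hm : f u with
      | top => simp
      | coe m =>
        rw [← WithTop.coe_add, WithTop.coe_lt_coe, WithTop.coe_lt_coe]
        omega
    have key2 : ∀ u v : ℤ, (v:WithTop ℤ) ≤ f u ↔ ((v + (n:ℤ) : ℤ):WithTop ℤ) ≤ f (u + (n:ℤ)) := by
      intro u v
      rw [hf.2.1 u]
      cases hm : f u with
      | top => simp
      | coe m =>
        rw [← WithTop.coe_add, WithTop.coe_le_coe, WithTop.coe_le_coe]
        omega
    constructor
    · rintro (rfl | ⟨h1, h2⟩ | ⟨h1, h2⟩)
      · exact Or.inl rfl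
      · exact Or.inr (Or.inl ⟨by omega, (key a b).mp h2⟩)
      · exact Or.inr (Or.inr ⟨by omega, (key2 b a).mp h2⟩)
    · rintro (h | ⟨h1, h2⟩ | ⟨h1, h2⟩)
      · exact Or.inl (by omega)
      · exact Or.inr (Or.inl ⟨by omega, (key a b).mpr h2⟩)
      · exact Or.inr (Or.inr ⟨by omega, (key2 b a).mpr h2⟩)

lemma ofFn_rel_iff {f : ℤ → WithTop ℤ} (hf : Good n f) {a b : ℤ} (h : a < b) :
    (ofFn n f hf).rel b a ↔ (b : WithTop ℤ) ≤ f a := by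
  constructor
  · rintro (rfl | ⟨h1, h2⟩ | ⟨h1, h2⟩)
    · omega
    · omega
    · exact h2
  · intro hb
    exact Or.inr (Or.inr ⟨h, hb⟩)

lemma ofFn_inv {f : ℤ → WithTop ℤ} (hf : Good n f) :
    (ofFn n f hf).Inversions = InvSet f := by
  ext p
  simp only [TITO.Inversions, InvSet, Set.mem_setOf_eq]
  constructor
  · rintro ⟨h1, h2⟩
    exact ⟨h1, (ofFn_rel_iff hf h1).mp h2⟩
  · rintro ⟨h1, h2⟩
    exact ⟨h1, (ofFn_rel_iff hf h1).mpr h2⟩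

lemma ofFn_avoids {f : ℤ → WithTop ℤ} (hf : Good n f) : (ofFn n f hf).Avoids312 := by
  rintro ⟨a, b, c, h1, h2, h3, h4⟩
  have h3' : (c : WithTop ℤ) ≤ f a := (ofFn_rel_iff hf (h1.trans h2)).mp h3
  rcases h4 with rfl | ⟨_, h5⟩ | ⟨h5, _⟩
  · omega
  · exact absurd (le_trans (WithTop.coe_le_coe.mpr (le_of_lt h2)) h3') (not_le.mpr h5)
  · omega

lemma ofFn_real {f : ℤ → WithTop ℤ} (hf : Good n f) (hn : 0 < n) (hr : Rl n f) :
    (ofFn n f hf).IsReal := by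
  intro a hcv
  have hlt : a < a + (n:ℤ) := by omega
  by_cases htop : f a = ⊤
  · obtain ⟨y, hy1, hy2, hy3⟩ := hr a htop
    exfalso
    have hyrel : (ofFn n f hf).rel (a + (n:ℤ)) y :=
      Or.inr (Or.inr ⟨hy2, by rw [hy3]; exact le_top⟩)
    have hyrel2 : (ofFn n f hf).rel y a :=
      Or.inr (Or.inr ⟨hy1, by rw [htop]; exact le_top⟩)
    have hymem := hcv (a + (n:ℤ)) ⟨1, by ring⟩ a ⟨0, by ring⟩ y hyrel hyrel2
    obtain ⟨k, hk⟩ := hymem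
    have hk1 : 0 < k * (n:ℤ) := by omega
    have hk2 : k * (n:ℤ) < (n:ℤ) := by omega
    have hkpos : 1 ≤ k := by
      by_contra hc
      push_neg at hc
      have : k * (n:ℤ) ≤ 0 := mul_nonpos_of_nonpos_of_nonneg (by omega) (by positivity)
      omega
    have : (n:ℤ) ≤ k * (n:ℤ) := le_mul_of_one_le_left (by positivity) hkpos
    omega
  · refine Or.inr (Or.inl ⟨hlt, ?_⟩)
    exact good_lt_of_ne_top hf hn htop

/- ## From TITOs to Good functions -/

lemma rel_down {t : TITO n} (ht : t.Avoids312) {a b c : ℤ} (h1 : a < b) (h2 : b ≤ c)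
    (hc : t.rel c a) : t.rel b a := by
  rcases eq_or_lt_of_le h2 with rfl | h2
  · exact hc
  · rcases t.total a b with h | h
    · exact absurd ⟨a, b, c, h1, h2, hc, h⟩ ht
    · exact h

noncomputable def fOf (t : TITO n) (a : ℤ) : WithTop ℤ :=
  if h : ∃ g : ℤ, (g = a ∨ (a < g ∧ t.rel g a)) ∧ ∀ b : ℤ, (b = a ∨ (a < b ∧ t.rel b a)) → b ≤ g
  then (h.choose : WithTop ℤ) else ⊤

lemma coe_le_fOf {t : TITO n} (ht : t.Avoids312) (a b : ℤ) :
    (b : WithTop ℤ) ≤ fOf t a ↔ (b ≤ a ∨ (a < b ∧ t.rel b a)) := by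
  unfold fOf
  split_ifs with h
  · have hs := h.choose_spec
    rw [WithTop.coe_le_coe]
    constructor
    · intro hb
      rcases le_or_gt b a with h1 | h1
      · exact Or.inl h1
      · refine Or.inr ⟨h1, ?_⟩
        rcases hs.1 with h2 | ⟨h2, h3⟩
        · omega
        · exact rel_down ht h1 hb h3
    · rintro (h1 | ⟨h1, h2⟩)
      · exact le_trans h1 (hs.2 a (Or.inl rfl))
      · exact hs.2 b (Or.inr ⟨h1, h2⟩)
  · simp only [le_top, true_iff]
    rcases le_or_gt b a with h1 | h1
    · exact Or.inl h1
    · refine Or.inr ⟨h1, ?_⟩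
      by_contra hcon
      -- S' unbounded above
      have hub : ¬ ∃ ub : ℤ, ∀ z : ℤ, (z = a ∨ (a < z ∧ t.rel z a)) → z ≤ ub := by
        intro ⟨ub, hubs⟩
        obtain ⟨g, hg1, hg2⟩ := Int.exists_greatest_of_bdd ⟨ub, hubs⟩ ⟨a, Or.inl rfl⟩
        exact h ⟨g, hg1, hg2⟩
      push_neg at hub
      obtain ⟨z, hz1, hz2⟩ := hub b
      rcases hz1 with rfl | ⟨hz3, hz4⟩
      · omega
      · exact hcon (rel_down ht h1 (by omega) hz4)

lemma fOf_rel_iff {t : TITO n} (ht : t.Avoids312) {a b : ℤ} (h : a < b) :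
    t.rel b a ↔ (b : WithTop ℤ) ≤ fOf t a := by
  rw [coe_le_fOf ht]
  constructor
  · intro hr; exact Or.inr ⟨h, hr⟩
  · rintro (h1 | ⟨_, h2⟩)
    · omega
    · exact h2

lemma fOf_inv {t : TITO n} (ht : t.Avoids312) : t.Inversions = InvSet (fOf t) := by
  ext p
  simp only [TITO.Inversions, InvSet, Set.mem_setOf_eq]
  exact ⟨fun ⟨h1, h2⟩ => ⟨h1, (fOf_rel_iff ht h1).mp h2⟩,
    fun ⟨h1, h2⟩ => ⟨h1, (fOf_rel_iff ht h1).mpr h2⟩⟩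

lemma fOf_top_iff {t : TITO n} (ht : t.Avoids312) {a : ℤ} :
    fOf t a = ⊤ ↔ ∀ b, a < b → t.rel b a := by
  constructor
  · intro h b hb
    exact (fOf_rel_iff ht hb).mpr (by rw [h]; exact le_top)
  · intro h
    cases hm : fOf t a with
    | top => rfl
    | coe m =>
      exfalso
      have h1 : (m : WithTop ℤ) ≤ fOf t a := by rw [hm]
      have hma : a ≤ m := by
        have h0 := (coe_le_fOf ht a a).mpr (Or.inl le_rfl)
        rw [hm, WithTop.coe_le_coe] at h0
        exact h0
      have h2 : ((m+1 : ℤ) : WithTop ℤ) ≤ fOf t a :=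
        (fOf_rel_iff ht (by omega)).mp (h (m+1) (by omega))
      rw [hm, WithTop.coe_le_coe] at h2
      omega

lemma good_fOf {t : TITO n} (ht : t.Avoids312) : Good n (fOf t) := by
  refine ⟨?_, ?_, ?_⟩
  · intro a
    exact (coe_le_fOf ht a a).mpr (Or.inl le_rfl)
  · intro a
    apply wt_eq_of_forall
    intro c
    rw [coe_le_fOf ht, wt_coe_le_add, coe_le_fOf ht]
    have hi : t.rel (c - (n:ℤ)) a ↔ t.rel c (a + (n:ℤ)) := by
      have := t.invariant (c - (n:ℤ)) a
      simpa using this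
    constructor
    · rintro (h | ⟨h1, h2⟩)
      · exact Or.inl (by omega)
      · exact Or.inr ⟨by omega, hi.mpr h2⟩
    · rintro (h | ⟨h1, h2⟩)
      · exact Or.inl (by omega)
      · exact Or.inr ⟨by omega, hi.mp h2⟩
  · intro a b hab hba
    apply wt_le_of_forall
    intro c hc
    rcases (coe_le_fOf ht b c).mp hc with h1 | ⟨h1, h2⟩
    · exact le_trans (WithTop.coe_le_coe.mpr h1) hba
    · have hrba : t.rel b a := (fOf_rel_iff ht hab).mpr hba
      exact (coe_le_fOf ht a c).mpr (Or.inr ⟨by omega, t.trans c b a h2 hrba⟩)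

lemma rel_shift {t : TITO n} (k : ℤ) (a b : ℤ) :
    t.rel a b ↔ t.rel (a + k * (n:ℤ)) (b + k * (n:ℤ)) := by
  induction k using Int.induction_on with
  | zero => simp
  | succ i ih =>
    have e1 : a + ((i:ℤ)+1) * (n:ℤ) = (a + (i:ℤ)*(n:ℤ)) + (n:ℤ) := by ring
    have e2 : b + ((i:ℤ)+1) * (n:ℤ) = (b + (i:ℤ)*(n:ℤ)) + (n:ℤ) := by ring
    rw [e1, e2, ← t.invariant]
    exact ih
  | pred i ih =>
    have e1 : a + (-(i:ℤ))*(n:ℤ) = (a + (-(i:ℤ)-1) * (n:ℤ)) + (n:ℤ) := by ring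
    have e2 : b + (-(i:ℤ))*(n:ℤ) = (b + (-(i:ℤ)-1) * (n:ℤ)) + (n:ℤ) := by ring
    rw [e1, e2, ← t.invariant] at ih
    exact ih

lemma real_Rl {t : TITO n} (ht : t.Avoids312) (hr : t.IsReal) (hn : 0 < n) :
    Rl n (fOf t) := by
  intro a htop
  by_contra H
  push_neg at H
  have hg := good_fOf ht
  have htopk : ∀ k : ℤ, fOf t (a + k * (n:ℤ)) = ⊤ := fun k =>
    (good_top_shift_k hg a k).mpr htop
  have relTop : ∀ c b : ℤ, fOf t c = ⊤ → c < b → t.rel b c := fun c b hc hcb =>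
    (fOf_top_iff ht).mp hc b hcb
  -- the residue class is order-convex
  have hconv : t.OrderConvex {x : ℤ | ∃ k : ℤ, x = a + k * (n:ℤ)} := by
    rintro x ⟨i, rfl⟩ z ⟨j, rfl⟩ u hxu huz
    by_contra hu
    simp only [Set.mem_setOf_eq] at hu
    push_neg at hu
    -- find the class element just below u
    set q : ℤ := (u - a) / (n:ℤ) with hq
    have hmod : q * (n:ℤ) + (u - a) % (n:ℤ) = u - a := by
      rw [hq, mul_comm]; exact Int.mul_ediv_add_emod _ _
    have hmnn := Int.emod_nonneg (u - a) (show (n:ℤ) ≠ 0 by omega)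
    have hmlt := Int.emod_lt_of_pos (u - a) (show (0:ℤ) < (n:ℤ) by omega)
    have hne : (u - a) % (n:ℤ) ≠ 0 := by
      intro h0
      exact hu q (by omega)
    have hlb : a + q * (n:ℤ) < u := by omega
    have hub : u < a + q * (n:ℤ) + (n:ℤ) := by omega
    have h1 : t.rel u (a + q * (n:ℤ)) := relTop _ u (htopk q) hlb
    have hxa' : t.rel (a + i * (n:ℤ)) (a + q * (n:ℤ)) := t.trans _ _ _ hxu h1
    have hiq : q + 1 ≤ i := by
      rcases lt_trichotomy i q with hlt | rfl | hgt
      · exfalso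
        have h2 : t.rel (a + q * (n:ℤ)) (a + i * (n:ℤ)) := by
          apply relTop _ _ (htopk i)
          have : i * (n:ℤ) < q * (n:ℤ) := by
            have : (q - i) * (n:ℤ) ≥ 1 * (n:ℤ) :=
              mul_le_mul_of_nonneg_right (by omega) (by positivity)
            nlinarith
          omega
        have := t.antisymm _ _ hxa' h2
        have : i * (n:ℤ) = q * (n:ℤ) := by omega
        have : i = q := by
          have hn0 : (n:ℤ) ≠ 0 := by omega
          exact mul_right_cancel₀ hn0 this
        omega
      · exfalso
        have := t.antisymm _ _ hxu h1
        exact hu q (by omega)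
      · omega
    set x := a + i * (n:ℤ) with hx
    have hxu' : u < x := by
      have : (i - q) * (n:ℤ) ≥ 1 * (n:ℤ) :=
        mul_le_mul_of_nonneg_right (by omega) (by positivity)
      have : i * (n:ℤ) ≥ q * (n:ℤ) + (n:ℤ) := by nlinarith
      omega
    -- u is above everything bigger than it
    have hchain : ∀ m : ℕ, t.rel (x + (m:ℤ) * (n:ℤ)) u := by
      intro m
      induction m with
      | zero => simpa using hxu
      | succ p ih =>
        have hstep : t.rel (x + ((p:ℤ)+1) * (n:ℤ)) (x + (p:ℤ) * (n:ℤ)) := by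
          apply relTop
          · have : x + (p:ℤ)*(n:ℤ) = a + (i + p) * (n:ℤ) := by rw [hx]; ring
            rw [this]; exact htopk _
          · have : (0:ℤ) < (n:ℤ) := by omega
            nlinarith
        have : ((p:ℤ)+1) = ((p+1 : ℕ) : ℤ) := by push_cast; ring
        rw [this] at hstep
        exact t.trans _ _ _ hstep ih
    have hutop : fOf t u = ⊤ := by
      rw [fOf_top_iff ht]
      intro b hb
      set m : ℕ := (b - x).toNat with hm
      have hbm : b ≤ x + (m:ℤ) * (n:ℤ) := by
        rcases le_or_gt b x with h1 | h1
        · have : (0:ℤ) ≤ (m:ℤ) * (n:ℤ) := by positivity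
          omega
        · have hmb : (m:ℤ) = b - x := by omega
          have : (m:ℤ) * 1 ≤ (m:ℤ) * (n:ℤ) :=
            mul_le_mul_of_nonneg_left (by omega) (by omega)
          omega
      exact rel_down ht hb hbm (hchain m)
    -- shift u into (a, a+n)
    have hytop : fOf t (a + (u - a) % (n:ℤ)) = ⊤ := by
      have hnq : (-q) * (n:ℤ) = -(q * (n:ℤ)) := by ring
      have : a + (u - a) % (n:ℤ) = u + (-q) * (n:ℤ) := by omega
      rw [this]
      exact (good_top_shift_k hg u (-q)).mpr hutop
    exact H (a + (u - a) % (n:ℤ)) (by omega) (by omega) hytop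
  have hrel := hr a hconv
  have hrel2 : t.rel (a + (n:ℤ)) a := relTop a _ htop (by omega)
  have := t.antisymm _ _ hrel hrel2
  omega

set_option linter.unusedSectionVars false

/- ## Meet: pointwise min -/

lemma good_min {f g : ℤ → WithTop ℤ} (hf : Good n f) (hg : Good n g) :
    Good n (fun a => min (f a) (g a)) := by
  refine ⟨?_, ?_, ?_⟩
  · intro a
    exact le_min (hf.1 a) (hg.1 a)
  · intro a
    simp only [hf.2.1 a, hg.2.1 a]
    cases hu : f a with
    | top => simp
    | coe u =>
      cases hv : g a with
      | top => simp
      | coe v =>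
        rw [← WithTop.coe_add, ← WithTop.coe_add]
        rcases le_total u v with h | h
        · rw [min_eq_left (WithTop.coe_le_coe.mpr h),
            min_eq_left (WithTop.coe_le_coe.mpr (by omega : u + (n:ℤ) ≤ v + (n:ℤ))),
            WithTop.coe_add]
        · rw [min_eq_right (WithTop.coe_le_coe.mpr h),
            min_eq_right (WithTop.coe_le_coe.mpr (by omega : v + (n:ℤ) ≤ u + (n:ℤ))),
            WithTop.coe_add]
  · intro a b hab hba
    exact le_min
      (le_trans (min_le_left _ _) (hf.2.2 a b hab (le_trans hba (min_le_left _ _))))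
      (le_trans (min_le_right _ _) (hg.2.2 a b hab (le_trans hba (min_le_right _ _))))

/- ## Join: pointwise infimum over a family -/

noncomputable def infFam (Fam : Set (ℤ → WithTop ℤ)) (a : ℤ) : WithTop ℤ :=
  if h : ∃ m : ℤ, (∃ w ∈ Fam, w a = (m:WithTop ℤ)) ∧
      ∀ m' : ℤ, (∃ w ∈ Fam, w a = (m':WithTop ℤ)) → m ≤ m'
  then (h.choose : WithTop ℤ) else ⊤

lemma infFam_cases {Fam : Set (ℤ → WithTop ℤ)} (hFam : ∀ w ∈ Fam, Good n w) (a : ℤ) :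
    (infFam Fam a = ⊤ ∧ ∀ w ∈ Fam, w a = ⊤) ∨
    (∃ w ∈ Fam, w a = infFam Fam a ∧ infFam Fam a ≠ ⊤) := by
  unfold infFam
  split_ifs with h
  · obtain ⟨⟨w, hw1, hw2⟩, _⟩ := h.choose_spec
    exact Or.inr ⟨w, hw1, hw2, WithTop.coe_ne_top⟩
  · refine Or.inl ⟨rfl, ?_⟩
    intro w hw
    cases hm : w a with
    | top => rfl
    | coe m =>
      exfalso
      apply h
      have hbdd : ∃ b : ℤ, ∀ z : ℤ, (∃ w ∈ Fam, w a = (z:WithTop ℤ)) → b ≤ z := by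
        refine ⟨a, ?_⟩
        rintro z ⟨w', hw', hz⟩
        have := (hFam w' hw').1 a
        rw [hz, WithTop.coe_le_coe] at this
        exact this
      obtain ⟨lb, hlb1, hlb2⟩ := Int.exists_least_of_bdd hbdd ⟨m, w, hw, hm⟩
      exact ⟨lb, hlb1, hlb2⟩

lemma infFam_le {Fam : Set (ℤ → WithTop ℤ)} (hFam : ∀ w ∈ Fam, Good n w) {w} (hw : w ∈ Fam)
    (a : ℤ) : infFam Fam a ≤ w a := by
  rcases infFam_cases hFam a with ⟨h1, h2⟩ | ⟨w', hw', h1, h2⟩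
  · rw [h2 w hw]; exact le_top
  · unfold infFam at h2 ⊢
    split_ifs at h2 ⊢ with h
    · obtain ⟨_, hmin⟩ := h.choose_spec
      cases hm : w a with
      | top => exact le_top
      | coe m => exact WithTop.coe_le_coe.mpr (hmin m ⟨w, hw, hm⟩)
    · exact absurd rfl h2

lemma coe_le_infFam_iff {Fam : Set (ℤ → WithTop ℤ)} (hFam : ∀ w ∈ Fam, Good n w) (a c : ℤ) :
    (c : WithTop ℤ) ≤ infFam Fam a ↔ ∀ w ∈ Fam, (c:WithTop ℤ) ≤ w a := by
  constructor
  · intro h w hw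
    exact le_trans h (infFam_le hFam hw a)
  · intro h
    rcases infFam_cases hFam a with ⟨h1, _⟩ | ⟨w', hw', h1, _⟩
    · rw [h1]; exact le_top
    · rw [← h1]; exact h w' hw'

lemma good_infFam {Fam : Set (ℤ → WithTop ℤ)} (hFam : ∀ w ∈ Fam, Good n w) :
    Good n (infFam Fam) := by
  refine ⟨?_, ?_, ?_⟩
  · intro a
    rcases infFam_cases hFam a with ⟨h1, _⟩ | ⟨w', hw', h1, _⟩
    · rw [h1]; exact le_top
    · rw [← h1]; exact (hFam w' hw').1 a
  · intro a
    apply wt_eq_of_forall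
    intro c
    rw [coe_le_infFam_iff hFam, wt_coe_le_add, coe_le_infFam_iff hFam]
    constructor
    · intro h w hw
      have := h w hw
      rw [(hFam w hw).2.1 a] at this
      exact wt_coe_le_add.mp this
    · intro h w hw
      rw [(hFam w hw).2.1 a, wt_coe_le_add]
      exact h w hw
  · intro a b hab hba
    rcases infFam_cases hFam a with ⟨h1, _⟩ | ⟨w', hw', h1, _⟩
    · rw [h1]; exact le_top
    · rw [← h1]
      refine le_trans (infFam_le hFam hw' b) ?_
      exact (hFam w' hw').2.2 a b hab (by rw [h1]; exact hba)

/- ## Repair -/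

noncomputable def repair (n : ℕ) (h : ℤ → WithTop ℤ) (x : ℤ) : WithTop ℤ :=
  if h x = ⊤ then ((x + (n:ℤ) - 1 : ℤ) : WithTop ℤ) else h x

lemma repair_ne_top {h : ℤ → WithTop ℤ} (x : ℤ) : repair n h x ≠ ⊤ := by
  unfold repair
  split_ifs with hx
  · exact WithTop.coe_ne_top
  · exact hx

lemma rl_repair {h : ℤ → WithTop ℤ} : Rl n (repair n h) :=
  fun a ha => absurd ha (repair_ne_top a)

lemma repair_le {h : ℤ → WithTop ℤ} (x : ℤ) : repair n h x ≤ h x := by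
  unfold repair
  split_ifs with hx
  · rw [hx]; exact le_top
  · exact le_rfl

-- context: h is Good, has a lonely top at a₀
section Repair
variable {h : ℤ → WithTop ℤ} (hh : Good n h) (hn : 0 < n) {a₀ : ℤ} (ha₀ : h a₀ = ⊤)
  (hlone : ∀ y, a₀ < y → y < a₀ + (n:ℤ) → h y ≠ ⊤)

include hh hn ha₀ hlone

lemma top_unique : ∀ x, h x = ⊤ → ∃ k : ℤ, x = a₀ + k * (n:ℤ) := by
  intro x hx
  set q : ℤ := (x - a₀) / (n:ℤ) with hq
  have hmod : q * (n:ℤ) + (x - a₀) % (n:ℤ) = x - a₀ := by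
    rw [hq, mul_comm]; exact Int.mul_ediv_add_emod _ _
  have hmnn := Int.emod_nonneg (x - a₀) (show (n:ℤ) ≠ 0 by omega)
  have hmlt := Int.emod_lt_of_pos (x - a₀) (show (0:ℤ) < (n:ℤ) by omega)
  by_cases hr : (x - a₀) % (n:ℤ) = 0
  · exact ⟨q, by omega⟩
  · exfalso
    have hnq : (-q) * (n:ℤ) = -(q * (n:ℤ)) := by ring
    have he : a₀ + (x - a₀) % (n:ℤ) = x + (-q) * (n:ℤ) := by omega
    have : h (a₀ + (x - a₀) % (n:ℤ)) = ⊤ := by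
      rw [he]
      exact (good_top_shift_k hh x (-q)).mpr hx
    exact hlone _ (by omega) (by omega) this

lemma good_repair : Good n (repair n h) := by
  refine ⟨?_, ?_, ?_⟩
  · intro a
    unfold repair
    split_ifs with ha
    · exact WithTop.coe_le_coe.mpr (by omega)
    · exact hh.1 a
  · intro a
    unfold repair
    have hiff := good_top_shift hh a
    split_ifs with h1 h2 h2
    · rw [← WithTop.coe_add]
      congr 1
      ring
    · exact absurd (hiff.mp h1) h2
    · exact absurd (hiff.mpr h2) h1
    · exact hh.2.1 a
  · intro a b hab hba
    by_cases ha : h a = ⊤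
    · have hra : repair n h a = ((a + (n:ℤ) - 1 : ℤ) : WithTop ℤ) := by
        unfold repair; rw [if_pos ha]
      rw [hra] at hba ⊢
      have hb : a < b ∧ b ≤ a + (n:ℤ) - 1 := ⟨hab, WithTop.coe_le_coe.mp hba⟩
      have hbt : h b ≠ ⊤ := by
        intro hbtop
        obtain ⟨k, hk⟩ := top_unique hh hn ha₀ hlone a ha
        obtain ⟨k', hk'⟩ := top_unique hh hn ha₀ hlone b hbtop
        have h1 : 0 < (k' - k) * (n:ℤ) := by
          have : (k' - k) * (n:ℤ) = k' * (n:ℤ) - k * (n:ℤ) := by ring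
          omega
        have h2 : (k' - k) * (n:ℤ) < (n:ℤ) := by
          have : (k' - k) * (n:ℤ) = k' * (n:ℤ) - k * (n:ℤ) := by ring
          omega
        have hk1 : 1 ≤ k' - k := by
          by_contra hc
          push_neg at hc
          have : (k' - k) * (n:ℤ) ≤ 0 :=
            mul_nonpos_of_nonpos_of_nonneg (by omega) (by positivity)
          omega
        have : 1 * (n:ℤ) ≤ (k' - k) * (n:ℤ) :=
          mul_le_mul_of_nonneg_right hk1 (by positivity)
        omega
      have hrb : repair n h b = h b := by unfold repair; rw [if_neg hbt]
      rw [hrb]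
      -- h b ≤ a + n - 1
      by_contra hcon
      push_neg at hcon
      have hge : ((a + (n:ℤ) : ℤ) : WithTop ℤ) ≤ h b := by
        cases hm : h b with
        | top => exact absurd hm hbt
        | coe m =>
          rw [hm] at hcon
          exact WithTop.coe_le_coe.mpr (by
            have := WithTop.coe_lt_coe.mp hcon
            omega)
      have h3 := hh.2.2 b (a + (n:ℤ)) (by omega) hge
      have h4 : h (a + (n:ℤ)) = ⊤ := (good_top_shift hh a).mpr ha
      rw [h4, top_le_iff] at h3
      exact hbt h3
    · have hra : repair n h a = h a := by unfold repair; rw [if_neg ha]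
      rw [hra] at hba ⊢
      have h3 := hh.2.2 a b hab hba
      have hbt : h b ≠ ⊤ := by
        intro hbtop
        rw [hbtop, top_le_iff] at h3
        exact ha h3
      have hrb : repair n h b = h b := by unfold repair; rw [if_neg hbt]
      rw [hrb]
      exact h3

lemma le_repair_of {f : ℤ → WithTop ℤ} (hf : Good n f) (hrf : Rl n f)
    (hfh : ∀ x, f x ≤ h x) : ∀ x, f x ≤ repair n h x := by
  intro x
  unfold repair
  split_ifs with hx
  · have hft : f x ≠ ⊤ := by
      intro hftop
      obtain ⟨y, hy1, hy2, hy3⟩ := hrf x hftop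
      have hhy : h y = ⊤ := top_le_iff.mp (by rw [← hy3]; exact hfh y)
      obtain ⟨k, hk⟩ := top_unique hh hn ha₀ hlone x hx
      obtain ⟨k', hk'⟩ := top_unique hh hn ha₀ hlone y hhy
      have h1 : 0 < (k' - k) * (n:ℤ) := by
        have : (k' - k) * (n:ℤ) = k' * (n:ℤ) - k * (n:ℤ) := by ring
        omega
      have h2 : (k' - k) * (n:ℤ) < (n:ℤ) := by
        have : (k' - k) * (n:ℤ) = k' * (n:ℤ) - k * (n:ℤ) := by ring
        omega
      have hk1 : 1 ≤ k' - k := by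
        by_contra hc
        push_neg at hc
        have : (k' - k) * (n:ℤ) ≤ 0 :=
          mul_nonpos_of_nonpos_of_nonneg (by omega) (by positivity)
        omega
      have : 1 * (n:ℤ) ≤ (k' - k) * (n:ℤ) :=
        mul_le_mul_of_nonneg_right hk1 (by positivity)
      omega
    calc f x ≤ ((x + (n:ℤ) - 1 : ℤ) : WithTop ℤ) := good_le_of_lt_add hf hn hft
    _ = _ := rfl
  · exact hfh x

lemma repair_le_of {w : ℤ → WithTop ℤ} (hw : ∀ x, h x ≤ w x) :
    ∀ x, repair n h x ≤ w x := by
  intro x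
  unfold repair
  split_ifs with hx
  · have : w x = ⊤ := top_le_iff.mp (by rw [← hx]; exact hw x)
    rw [this]; exact le_top
  · exact hw x

end Repair

end AffT

open AffT in
theorem stmt7 (n : ℕ) (hn : 2 ≤ n) (x y : TITO n) (hx : x.Avoids312 ∧ x.IsReal)
    (hy : y.Avoids312 ∧ y.IsReal) :
    (∃ m : TITO n, m.Avoids312 ∧ m.IsReal ∧
      m.Inversions ⊆ x.Inversions ∧ m.Inversions ⊆ y.Inversions ∧
      ∀ w : TITO n, w.Avoids312 → w.IsReal →
        w.Inversions ⊆ x.Inversions → w.Inversions ⊆ y.Inversions →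
        w.Inversions ⊆ m.Inversions) ∧
    (∃ j : TITO n, j.Avoids312 ∧ j.IsReal ∧
      x.Inversions ⊆ j.Inversions ∧ y.Inversions ⊆ j.Inversions ∧
      ∀ w : TITO n, w.Avoids312 → w.IsReal →
        x.Inversions ⊆ w.Inversions → y.Inversions ⊆ w.Inversions →
        j.Inversions ⊆ w.Inversions) := by
  obtain ⟨hxa, hxr⟩ := hx
  obtain ⟨hya, hyr⟩ := hy
  have hn0 : 0 < n := by omega
  have Gx := good_fOf hxa
  have Gy := good_fOf hya
  have Rx := real_Rl hxa hxr hn0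
  have Ry := real_Rl hya hyr hn0
  have invx : x.Inversions = InvSet (fOf x) := fOf_inv hxa
  have invy : y.Inversions = InvSet (fOf y) := fOf_inv hya
  constructor
  · -- MEET
    set h : ℤ → WithTop ℤ := fun a => min (fOf x a) (fOf y a) with hdef
    have Gh : Good n h := good_min Gx Gy
    have hUP : ∀ w : TITO n, w.Avoids312 → w.IsReal →
        w.Inversions ⊆ x.Inversions → w.Inversions ⊆ y.Inversions →
        ∀ a, fOf w a ≤ h a := by
      intro w hwa hwr hwx hwy a
      have h1 : ∀ a, fOf w a ≤ fOf x a :=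
        le_of_invSet_subset Gx (by rw [← fOf_inv hwa, ← invx]; exact hwx)
      have h2 : ∀ a, fOf w a ≤ fOf y a :=
        le_of_invSet_subset Gy (by rw [← fOf_inv hwa, ← invy]; exact hwy)
      exact le_min (h1 a) (h2 a)
    by_cases hrl : Rl n h
    · refine ⟨ofFn n h Gh, ofFn_avoids Gh, ofFn_real Gh hn0 hrl, ?_, ?_, ?_⟩
      · rw [ofFn_inv Gh, invx]
        exact invSet_mono fun a => min_le_left _ _
      · rw [ofFn_inv Gh, invy]
        exact invSet_mono fun a => min_le_right _ _
      · intro w hwa hwr hwx hwy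
        rw [fOf_inv hwa, ofFn_inv Gh]
        exact invSet_mono (hUP w hwa hwr hwx hwy)
    · rw [Rl] at hrl
      push_neg at hrl
      obtain ⟨a₀, ha₀, hlone⟩ := hrl
      have GR := good_repair Gh hn0 ha₀ hlone
      refine ⟨ofFn n (repair n h) GR, ofFn_avoids GR, ofFn_real GR hn0 rl_repair, ?_, ?_, ?_⟩
      · rw [ofFn_inv GR, invx]
        exact invSet_mono fun a => le_trans (repair_le a) (min_le_left _ _)
      · rw [ofFn_inv GR, invy]
        exact invSet_mono fun a => le_trans (repair_le a) (min_le_right _ _)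
      · intro w hwa hwr hwx hwy
        rw [fOf_inv hwa, ofFn_inv GR]
        exact invSet_mono (le_repair_of Gh hn0 ha₀ hlone (good_fOf hwa)
          (real_Rl hwa hwr hn0) (hUP w hwa hwr hwx hwy))
  · -- JOIN
    set Fam : Set (ℤ → WithTop ℤ) :=
      {w | Good n w ∧ Rl n w ∧ (∀ a, fOf x a ≤ w a) ∧ (∀ a, fOf y a ≤ w a)} with hFamdef
    have hFam : ∀ w ∈ Fam, Good n w := fun w hw => hw.1
    set j : ℤ → WithTop ℤ := infFam Fam with hjdef
    have Gj : Good n j := good_infFam hFam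
    have hjle : ∀ w ∈ Fam, ∀ a, j a ≤ w a := fun w hw a => infFam_le hFam hw a
    have hxj : ∀ a, fOf x a ≤ j a := by
      intro a
      rw [hjdef]
      rcases infFam_cases hFam a with ⟨h1, _⟩ | ⟨w', hw', h1, _⟩
      · rw [h1]; exact le_top
      · rw [← h1]; exact hw'.2.2.1 a
    have hyj : ∀ a, fOf y a ≤ j a := by
      intro a
      rw [hjdef]
      rcases infFam_cases hFam a with ⟨h1, _⟩ | ⟨w', hw', h1, _⟩
      · rw [h1]; exact le_top
      · rw [← h1]; exact hw'.2.2.2 a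
    have hwMem : ∀ w : TITO n, w.Avoids312 → w.IsReal →
        x.Inversions ⊆ w.Inversions → y.Inversions ⊆ w.Inversions → fOf w ∈ Fam := by
      intro w hwa hwr hwx hwy
      refine ⟨good_fOf hwa, real_Rl hwa hwr hn0, ?_, ?_⟩
      · exact le_of_invSet_subset (good_fOf hwa) (by rw [← fOf_inv hwa, ← invx]; exact hwx)
      · exact le_of_invSet_subset (good_fOf hwa) (by rw [← fOf_inv hwa, ← invy]; exact hwy)
    by_cases hrl : Rl n j
    · refine ⟨ofFn n j Gj, ofFn_avoids Gj, ofFn_real Gj hn0 hrl, ?_, ?_, ?_⟩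
      · rw [ofFn_inv Gj, invx]; exact invSet_mono hxj
      · rw [ofFn_inv Gj, invy]; exact invSet_mono hyj
      · intro w hwa hwr hwx hwy
        rw [fOf_inv hwa, ofFn_inv Gj]
        exact invSet_mono (hjle _ (hwMem w hwa hwr hwx hwy))
    · rw [Rl] at hrl
      push_neg at hrl
      obtain ⟨a₀, ha₀, hlone⟩ := hrl
      have GR := good_repair Gj hn0 ha₀ hlone
      refine ⟨ofFn n (repair n j) GR, ofFn_avoids GR, ofFn_real GR hn0 rl_repair, ?_, ?_, ?_⟩
      · rw [ofFn_inv GR, invx]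
        exact invSet_mono (le_repair_of Gj hn0 ha₀ hlone Gx Rx hxj)
      · rw [ofFn_inv GR, invy]
        exact invSet_mono (le_repair_of Gj hn0 ha₀ hlone Gy Ry hyj)
      · intro w hwa hwr hwx hwy
        rw [fOf_inv hwa, ofFn_inv GR]
        exact invSet_mono (repair_le_of Gj hn0 ha₀ hlone (hjle _ (hwMem w hwa hwr hwx hwy)))
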